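/- Pseudorandomness of rectangles against disjointness: let R ⊆ {0,1}^n × {0,1}^n be a rectangle with |R ∩ D_0| ≥ |D_0| · 2^{−c} where D_0 = {(x,y) : x ∧ y = 0^n}. Then there exists S ⊆ [n] with |S| ≥ n − 2c such that for every i ∈ S, there exists (x,y) ∈ R with x ∧ y = e_i. -/

import Mathlib

open Finset

lemma count_base (n : ℕ) (V : Finset (Fin n)) (X Y : Finset (Fin n → Bool))
    (hX : ∀ x ∈ X, ∀ l, l ∉ V → x l = false)
    (hY : ∀ y ∈ Y, ∀ l, l ∉ V → y l = false) :
    ((X ×ˢ Y).filter (fun p => ∀ i, ¬(p.1 i = true ∧ p.2 i = true))).card ≤ 3 ^ V.card := by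
  have h := Finset.card_le_card_of_injOn
    (f := fun p : (Fin n → Bool) × (Fin n → Bool) =>
      (fun l => if p.1 l = true then (2 : Fin 3) else if p.2 l = true then 1 else 0))
    (s := (X ×ˢ Y).filter (fun p => ∀ i, ¬(p.1 i = true ∧ p.2 i = true)))
    (t := Fintype.piFinset (fun l => if l ∈ V then (univ : Finset (Fin 3)) else {0}))
    ?_ ?_
  · refine h.trans_eq ?_
    rw [Fintype.card_piFinset]
    have : ∀ l : Fin n, ((if l ∈ V then (univ : Finset (Fin 3)) else {0}).card)
        = if l ∈ V then 3 else 1 := by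
      intro l; by_cases hl : l ∈ V <;> simp [hl]
    rw [Finset.prod_congr rfl (fun l _ => this l)]
    rw [Finset.prod_ite_mem, univ_inter, Finset.prod_const]
  · intro p hp
    simp only [Finset.mem_coe, mem_filter, mem_product] at hp ⊢
    rw [Fintype.mem_piFinset]
    intro l
    by_cases hl : l ∈ V
    · have : (if l ∈ V then (univ : Finset (Fin 3)) else {0}) = univ := if_pos hl
      rw [this]; exact mem_univ _
    · have : (if l ∈ V then (univ : Finset (Fin 3)) else {0}) = {0} := if_neg hl
      rw [this, mem_singleton]
      show (if p.1 l = true then (2:Fin 3) else if p.2 l = true then 1 else 0) = 0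
      rw [hX p.1 hp.1.1 l hl, hY p.2 hp.1.2 l hl]
      rfl
  · intro p hp q hq hfq
    simp only [Finset.mem_coe, mem_filter, mem_product] at hp hq
    have e : ∀ l, p.1 l = q.1 l ∧ p.2 l = q.2 l := by
      intro l
      have h1 : (if p.1 l = true then (2:Fin 3) else if p.2 l = true then 1 else 0)
          = (if q.1 l = true then (2:Fin 3) else if q.2 l = true then 1 else 0) :=
        congrFun hfq l
      have d1 := hp.2 l
      have d2 := hq.2 l
      cases hpx : p.1 l <;> cases hpy : p.2 l <;> cases hqx : q.1 l <;> cases hqy : q.2 l <;>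
        (try simp only [hpx, hpy, hqx, hqy] at h1 d1 d2 ⊢) <;>
        simp_all
    exact Prod.ext (funext fun l => (e l).1) (funext fun l => (e l).2)

lemma count_split (n : ℕ) (i : Fin n) (X Y : Finset (Fin n → Bool))
    (hbad : ¬ ∃ x ∈ X, ∃ y ∈ Y, ∀ l, (x l = true ∧ y l = true) ↔ l = i) :
    ((X ×ˢ Y).filter (fun p => ∀ i, ¬(p.1 i = true ∧ p.2 i = true))).card
      ≤ (((X.filter (fun x => x i = false)) ×ˢ (Y.image (fun y => Function.update y i false))).filter
          (fun p => ∀ i, ¬(p.1 i = true ∧ p.2 i = true))).card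
        + (((X.image (fun x => Function.update x i false)) ×ˢ (Y.filter (fun y => y i = false))).filter
          (fun p => ∀ i, ¬(p.1 i = true ∧ p.2 i = true))).card := by
  classical
  set P : (Fin n → Bool) × (Fin n → Bool) → Prop :=
    fun p => ∀ i, ¬(p.1 i = true ∧ p.2 i = true) with hP
  set D := (X ×ˢ Y).filter (fun p => ∀ i, ¬(p.1 i = true ∧ p.2 i = true)) with hD
  set predL : (Fin n → Bool) × (Fin n → Bool) → Prop :=
    fun p => p.1 i = false ∧ (p.2 i = true ∨ Function.update p.2 i true ∉ Y) with hpredL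
  have hsplit := Finset.card_filter_add_card_filter_not (s := D) (p := predL)
  rw [← hsplit]
  have hLle : (D.filter predL).card ≤ (((X.filter (fun x => x i = false)) ×ˢ (Y.image (fun y => Function.update y i false))).filter
          (fun p => ∀ i, ¬(p.1 i = true ∧ p.2 i = true))).card := by
    apply Finset.card_le_card_of_injOn
      (fun p : (Fin n → Bool) × (Fin n → Bool) => (p.1, Function.update p.2 i false))
    · intro p hp
      simp only [Finset.mem_coe, mem_filter, mem_product, hD, hpredL] at hp ⊢
      obtain ⟨⟨⟨hx, hy⟩, hdis⟩, hL⟩ := hp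
      refine ⟨⟨⟨hx, hL.1⟩, mem_image_of_mem _ hy⟩, ?_⟩
      intro l
      by_cases hl : l = i
      · subst hl; simp [Function.update_self]
      · simp only [Function.update_of_ne hl]; exact hdis l
    · intro p hp q hq hfq
      simp only [Finset.mem_coe, mem_filter, mem_product, hD, hpredL] at hp hq
      obtain ⟨⟨⟨hpx, hpy⟩, hpdis⟩, hpL⟩ := hp
      obtain ⟨⟨⟨hqx, hqy⟩, hqdis⟩, hqL⟩ := hq
      simp only [Prod.mk.injEq] at hfq
      obtain ⟨h1, h2⟩ := hfq
      have hoff : ∀ l, l ≠ i → p.2 l = q.2 l := by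
        intro l hl
        have := congrFun h2 l
        simpa [Function.update_of_ne hl] using this
      have hii : p.2 i = q.2 i := by
        cases hbp : p.2 i <;> cases hbq : q.2 i
        · rfl
        · -- p.2 i = false, q.2 i = true : p's predL is violated
          exfalso
          rcases hpL.2 with h | h
          · rw [hbp] at h; exact Bool.false_ne_true h
          · apply h
            have : Function.update p.2 i true = q.2 := by
              funext l
              by_cases hl : l = i
              · subst hl; simp [Function.update_self, hbq]
              · simp [Function.update_of_ne hl, hoff l hl]
            rw [this]; exact hqy
        · exfalso
          rcases hqL.2 with h | h
          · rw [hbq] at h; exact Bool.false_ne_true h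
          · apply h
            have : Function.update q.2 i true = p.2 := by
              funext l
              by_cases hl : l = i
              · subst hl; simp [Function.update_self, hbp]
              · simp [Function.update_of_ne hl, (hoff l hl).symm]
            rw [this]; exact hpy
        · rfl
      have : p.2 = q.2 := by
        funext l
        by_cases hl : l = i
        · rw [hl]; exact hii
        · exact hoff l hl
      exact Prod.ext h1 this
  have hRle : (D.filter (fun a => ¬ predL a)).card ≤ (((X.image (fun x => Function.update x i false)) ×ˢ (Y.filter (fun y => y i = false))).filter
          (fun p => ∀ i, ¬(p.1 i = true ∧ p.2 i = true))).card := by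
    apply Finset.card_le_card_of_injOn
      (fun p : (Fin n → Bool) × (Fin n → Bool) => (Function.update p.1 i false, p.2))
    · intro p hp
      simp only [Finset.mem_coe, mem_filter, mem_product, hD, hpredL] at hp ⊢
      obtain ⟨⟨⟨hx, hy⟩, hdis⟩, hL⟩ := hp
      push_neg at hL
      have hyi : p.2 i = false := by
        cases hxi : p.1 i
        · have := hL hxi
          cases hyy : p.2 i
          · rfl
          · exact absurd hyy (this.1)
        · cases hyy : p.2 i
          · rfl
          · exact absurd ⟨hxi, hyy⟩ (hdis i)
      refine ⟨⟨mem_image_of_mem _ hx, ⟨hy, hyi⟩⟩, ?_⟩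
      intro l
      by_cases hl : l = i
      · subst hl; simp [Function.update_self]
      · simp only [Function.update_of_ne hl]; exact hdis l
    · intro p hp q hq hfq
      simp only [Finset.mem_coe, mem_filter, mem_product, hD, hpredL] at hp hq
      obtain ⟨⟨⟨hpx, hpy⟩, hpdis⟩, hpL⟩ := hp
      obtain ⟨⟨⟨hqx, hqy⟩, hqdis⟩, hqL⟩ := hq
      push_neg at hpL hqL
      simp only [Prod.mk.injEq] at hfq
      obtain ⟨h1, h2⟩ := hfq
      have hoff : ∀ l, l ≠ i → p.1 l = q.1 l := by
        intro l hl
        have := congrFun h1 l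
        simpa [Function.update_of_ne hl] using this
      -- key badness use
      have hkey : ∀ a b : (Fin n → Bool) × (Fin n → Bool),
          a.1 ∈ X → (∀ l, ¬(a.1 l = true ∧ a.2 l = true)) →
          a.2 = b.2 →
          a.1 i = true → Function.update b.2 i true ∈ Y → False := by
        intro a b hax hadis h2ab hai hby'
        apply hbad
        refine ⟨a.1, hax, Function.update b.2 i true, hby', ?_⟩
        intro l
        constructor
        · rintro ⟨hal, hbl⟩
          by_contra hne
          rw [Function.update_of_ne hne] at hbl
          rw [← h2ab] at hbl
          exact hadis l ⟨hal, hbl⟩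
        · rintro rfl
          exact ⟨hai, by simp⟩
      have hxi : p.1 i = q.1 i := by
        cases hbp : p.1 i <;> cases hbq : q.1 i
        · rfl
        · exfalso
          have hc := hpL hbp
          exact hkey q p hqx hqdis h2.symm hbq hc.2
        · exfalso
          have hc := hqL hbq
          exact hkey p q hpx hpdis h2 hbp hc.2
        · rfl
      have hxx : p.1 = q.1 := by
        funext l
        by_cases hl : l = i
        · rw [hl]; exact hxi
        · exact hoff l hl
      exact Prod.ext hxx h2
  exact Nat.add_le_add hLle hRle

lemma count_key (n : ℕ) (B : Finset (Fin n)) :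
    ∀ V : Finset (Fin n), B ⊆ V →
    ∀ X Y : Finset (Fin n → Bool),
    (∀ x ∈ X, ∀ l, l ∉ V → x l = false) →
    (∀ y ∈ Y, ∀ l, l ∉ V → y l = false) →
    (∀ j ∈ B, ¬ ∃ x ∈ X, ∃ y ∈ Y, ∀ l, (x l = true ∧ y l = true) ↔ l = j) →
    ((X ×ˢ Y).filter (fun p => ∀ i, ¬(p.1 i = true ∧ p.2 i = true))).card
      ≤ 2 ^ B.card * 3 ^ (V.card - B.card) := by
  classical
  induction B using Finset.induction_on with
  | empty =>
    intro V _ X Y hX hY _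
    simpa using count_base n V X Y hX hY
  | @insert i B' hi ih =>
    intro V hBV X Y hX hY hbad
    have hiV : i ∈ V := hBV (mem_insert_self i B')
    have hB'V : B' ⊆ V.erase i := by
      intro j hj
      exact mem_erase.mpr ⟨fun hji => hi (hji ▸ hj), hBV (mem_insert_of_mem hj)⟩
    set X₁ := X.filter (fun x => x i = false) with hX₁
    set Y₁ := Y.image (fun y => Function.update y i false) with hY₁
    set X₂ := X.image (fun x => Function.update x i false) with hX₂
    set Y₂ := Y.filter (fun y => y i = false) with hY₂
    -- child 1 hypotheses
    have hX₁s : ∀ x ∈ X₁, ∀ l, l ∉ V.erase i → x l = false := by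
      intro x hx l hl
      rw [hX₁, mem_filter] at hx
      rcases (not_iff_not.mpr mem_erase).mp hl with h
      by_cases hli : l = i
      · rw [hli]; exact hx.2
      · have : l ∉ V := by
          by_contra hlV
          exact hl (mem_erase.mpr ⟨hli, hlV⟩)
        exact hX x hx.1 l this
    have hY₁s : ∀ y ∈ Y₁, ∀ l, l ∉ V.erase i → y l = false := by
      intro y hy l hl
      rw [hY₁, mem_image] at hy
      obtain ⟨y₀, hy₀, rfl⟩ := hy
      by_cases hli : l = i
      · rw [hli]; simp
      · rw [Function.update_of_ne hli]
        have : l ∉ V := by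
          by_contra hlV
          exact hl (mem_erase.mpr ⟨hli, hlV⟩)
        exact hY y₀ hy₀ l this
    have hX₂s : ∀ x ∈ X₂, ∀ l, l ∉ V.erase i → x l = false := by
      intro x hx l hl
      rw [hX₂, mem_image] at hx
      obtain ⟨x₀, hx₀, rfl⟩ := hx
      by_cases hli : l = i
      · rw [hli]; simp
      · rw [Function.update_of_ne hli]
        have : l ∉ V := by
          by_contra hlV
          exact hl (mem_erase.mpr ⟨hli, hlV⟩)
        exact hX x₀ hx₀ l this
    have hY₂s : ∀ y ∈ Y₂, ∀ l, l ∉ V.erase i → y l = false := by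
      intro y hy l hl
      rw [hY₂, mem_filter] at hy
      by_cases hli : l = i
      · rw [hli]; exact hy.2
      · have : l ∉ V := by
          by_contra hlV
          exact hl (mem_erase.mpr ⟨hli, hlV⟩)
        exact hY y hy.1 l this
    -- child 1 badness
    have hbad₁ : ∀ j ∈ B', ¬ ∃ x ∈ X₁, ∃ y ∈ Y₁, ∀ l, (x l = true ∧ y l = true) ↔ l = j := by
      intro j hj hex
      obtain ⟨x, hx, y', hy', hxy⟩ := hex
      rw [hX₁, mem_filter] at hx
      rw [hY₁, mem_image] at hy'
      obtain ⟨y, hy, rfl⟩ := hy'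
      apply hbad j (mem_insert_of_mem hj)
      refine ⟨x, hx.1, y, hy, ?_⟩
      intro l
      by_cases hli : l = i
      · constructor
        · rintro ⟨hxl, -⟩
          rw [hli, hx.2] at hxl
          exact absurd hxl Bool.false_ne_true
        · intro hlj
          have hij : i = j := hli.symm.trans hlj
          exact absurd hj (hij ▸ hi)
      · have := hxy l
        rwa [Function.update_of_ne hli] at this
    have hbad₂ : ∀ j ∈ B', ¬ ∃ x ∈ X₂, ∃ y ∈ Y₂, ∀ l, (x l = true ∧ y l = true) ↔ l = j := by
      intro j hj hex
      obtain ⟨x', hx', y, hy, hxy⟩ := hex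
      rw [hX₂, mem_image] at hx'
      obtain ⟨x, hx, rfl⟩ := hx'
      rw [hY₂, mem_filter] at hy
      apply hbad j (mem_insert_of_mem hj)
      refine ⟨x, hx, y, hy.1, ?_⟩
      intro l
      by_cases hli : l = i
      · constructor
        · rintro ⟨-, hyl⟩
          rw [hli, hy.2] at hyl
          exact absurd hyl Bool.false_ne_true
        · intro hlj
          have hij : i = j := hli.symm.trans hlj
          exact absurd hj (hij ▸ hi)
      · have := hxy l
        rwa [Function.update_of_ne hli] at this
    have ih₁ := ih (V.erase i) hB'V X₁ Y₁ hX₁s hY₁s hbad₁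
    have ih₂ := ih (V.erase i) hB'V X₂ Y₂ hX₂s hY₂s hbad₂
    have hsplit := count_split n i X Y (hbad i (mem_insert_self i B'))
    have hcards : (V.erase i).card = V.card - 1 := card_erase_of_mem hiV
    have hBcard : (insert i B').card = B'.card + 1 := card_insert_of_notMem hi
    have hle : B'.card + 1 ≤ V.card := by
      have := card_le_card hBV
      rwa [hBcard] at this
    have harith : 2 ^ B'.card * 3 ^ ((V.erase i).card - B'.card)
        + 2 ^ B'.card * 3 ^ ((V.erase i).card - B'.card)
        = 2 ^ (B'.card + 1) * 3 ^ (V.card - (B'.card + 1)) := by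
      rw [hcards]
      have h2 : V.card - 1 - B'.card = V.card - (B'.card + 1) := by
        rw [Nat.sub_sub, Nat.add_comm]
      rw [h2]
      ring
    rw [hBcard]
    exact hsplit.trans ((Nat.add_le_add ih₁ ih₂).trans_eq harith)

theorem stmt_14 (n : ℕ) (c : ℝ) (X Y : Finset (Fin n → Bool))
    (h : (3:ℝ)^n * (2:ℝ)^(-c) ≤
      (((X ×ˢ Y).filter (fun p => ∀ i, ¬(p.1 i = true ∧ p.2 i = true))).card : ℝ)) :
    ∃ S : Finset (Fin n), (n:ℝ) - 2*c ≤ (S.card : ℝ) ∧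
      ∀ i ∈ S, ∃ x ∈ X, ∃ y ∈ Y, ∀ l, (x l = true ∧ y l = true) ↔ l = i := by
  classical
  set good : Fin n → Prop :=
    fun i => ∃ x ∈ X, ∃ y ∈ Y, ∀ l, (x l = true ∧ y l = true) ↔ l = i with hgood
  refine ⟨univ.filter good, ?_, ?_⟩
  swap
  · intro i hi
    exact (mem_filter.mp hi).2
  set B := univ.filter (fun i => ¬ good i) with hB
  have hbad : ∀ j ∈ B, ¬ ∃ x ∈ X, ∃ y ∈ Y, ∀ l, (x l = true ∧ y l = true) ↔ l = j := by
    intro j hj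
    exact (mem_filter.mp hj).2
  have hkey := count_key n B univ (subset_univ B) X Y
    (fun x _ l hl => absurd (mem_univ l) hl)
    (fun y _ l hl => absurd (mem_univ l) hl) hbad
  have huniv : (univ : Finset (Fin n)).card = n := by simp
  rw [huniv] at hkey
  have hbn : B.card ≤ n := by
    have := card_le_card (subset_univ B)
    rwa [huniv] at this
  -- real arithmetic
  set b := B.card with hb
  have hcast : ((((X ×ˢ Y).filter (fun p => ∀ i, ¬(p.1 i = true ∧ p.2 i = true))).card : ℕ) : ℝ)
      ≤ (2:ℝ)^b * 3^(n - b) := by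
    calc ((((X ×ˢ Y).filter (fun p => ∀ i, ¬(p.1 i = true ∧ p.2 i = true))).card : ℕ) : ℝ)
        ≤ ((2^b * 3^(n-b) : ℕ) : ℝ) := by exact_mod_cast hkey
      _ = (2:ℝ)^b * 3^(n - b) := by push_cast; ring
  have hchain : (3:ℝ)^n * (2:ℝ)^(-c) ≤ (3:ℝ)^n * ((2:ℝ)/3)^b := by
    refine (h.trans hcast).trans (le_of_eq ?_)
    have h3 : (3:ℝ)^n = 3^b * 3^(n-b) := by
      rw [← pow_add]
      congr 1
      omega
    rw [h3, div_pow]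
    field_simp
  have h1 : (2:ℝ)^(-c) ≤ ((2:ℝ)/3)^b := by
    have h3pos : (0:ℝ) < 3^n := by positivity
    exact le_of_mul_le_mul_left (by linarith [hchain]) h3pos
  have h23 : ((2:ℝ)/3) ≤ (2:ℝ)^(-(1/2) : ℝ) := by
    have e : ((2:ℝ)^(-(1/2):ℝ))^(2:ℕ) = 1/2 := by
      rw [← Real.rpow_natCast ((2:ℝ)^(-(1/2):ℝ)) 2, ← Real.rpow_mul (by norm_num)]
      norm_num
    refine le_of_pow_le_pow_left₀ (n := 2) two_ne_zero (Real.rpow_nonneg (by norm_num) _) ?_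
    rw [e]
    norm_num
  have h2 : ((2:ℝ)/3)^b ≤ ((2:ℝ)^(-(1/2):ℝ))^b :=
    pow_le_pow_left₀ (by norm_num) h23 b
  have h3 : ((2:ℝ)^(-(1/2):ℝ))^b = (2:ℝ)^((-(1/2) : ℝ) * b) := by
    rw [← Real.rpow_natCast ((2:ℝ)^(-(1/2):ℝ)) b, ← Real.rpow_mul (by norm_num)]
  have h4 : (2:ℝ)^(-c) ≤ (2:ℝ)^((-(1/2) : ℝ) * b) := by
    rw [← h3]
    exact h1.trans h2
  have h5 : -c ≤ (-(1/2) : ℝ) * b := (Real.rpow_le_rpow_left_iff (by norm_num)).mp h4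
  have hbc : (b : ℝ) ≤ 2 * c := by linarith
  have hcardS : (univ.filter good).card + B.card = n := by
    rw [hB]
    rw [Finset.card_filter_add_card_filter_not (p := good)]
    exact huniv
  have : ((univ.filter good).card : ℝ) = (n : ℝ) - (b : ℝ) := by
    have := hcardS
    push_cast [← this]
    ring
  rw [this]
  linarith
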